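/- arXiv:2208.14909 — 4 statements merged into one kernel-verified Lean document; each statement's English description precedes it below -/
import Mathlib

section
/- Fix c ≥ 0 and 0 < δ ≤ 1/2. There is a constant C(c) > 0 such that the following holds for all real T ≥ 2, all real z with 2 ≤ z < T^δ, and all complex sequences (a_n), (b_m) with |a_n| ≤ 1 and |b_m| ≤ 1 for all n, m. Define H = {k ∈ ℕ : z^{1/2} ≤ k ≤ T^δ/z^{1/2} − 1}, I_k = {n ∈ ℕ : z^{1/2} k < n ≤ z^{1/2}(k+1)} and J_k = {m ∈ ℕ : z < m ≤ T/(z^{1/2}(k+1))}. Then |∑*_{z < n ≤ T^δ} ∑*_{z < m ≤ T/n} (nm)^c a_n b_m (n/m) − ∑_{k ∈ H} ∑*_{n ∈ I_k} ∑*_{m ∈ J_k} (nm)^c a_n b_m (n/m)| ≤ C(c) · T^{1+c} / z^{1/2}, where starred sums run over odd square-free integers in the indicated ranges. -/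
open Finset
open scoped Classical

private lemma jac_abs_le (a : ℤ) (b : ℕ) : ‖((jacobiSym a b : ℤ) : ℂ)‖ ≤ 1 := by
  rcases jacobiSym.trichotomy a b with h | h | h <;> simp [h]

private lemma card_nat_le (F : Finset ℕ) (A B : ℝ) (h : ∀ m ∈ F, A < (m : ℝ) ∧ (m : ℝ) ≤ B) :
    (F.card : ℝ) ≤ max 0 (B - A + 1) := by
  have h1 : F.card ≤ (Finset.Ioc ⌊A⌋ ⌊B⌋).card := by
    refine Finset.card_le_card_of_injOn (fun m => (m : ℤ)) ?_ ?_
    · intro m hm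
      rcases h m hm with ⟨ha, hb⟩
      simp only [Finset.mem_coe, Finset.mem_Ioc]
      exact ⟨Int.floor_lt.mpr (by exact_mod_cast ha), Int.le_floor.mpr (by exact_mod_cast hb)⟩
    · intro x _ y _ hxy; simpa using hxy
  have h2 : ((Finset.Ioc ⌊A⌋ ⌊B⌋).card : ℝ) ≤ max 0 (B - A + 1) := by
    rw [Int.card_Ioc]
    have hA := Int.floor_le A
    have hB := Int.floor_le B
    have hA2 := Int.lt_floor_add_one A
    rcases le_or_gt (⌊B⌋ - ⌊A⌋) 0 with hle | hlt
    · rw [Int.toNat_of_nonpos hle]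
      simp only [Nat.cast_zero]
      exact le_max_left _ _
    · have heq : (((⌊B⌋ - ⌊A⌋).toNat : ℕ) : ℝ) = ((⌊B⌋ : ℝ) - (⌊A⌋ : ℝ)) := by
        have := Int.toNat_of_nonneg hlt.le
        exact_mod_cast congrArg (fun x : ℤ => (x : ℝ)) this
      rw [heq]
      refine le_trans ?_ (le_max_right _ _)
      push_cast at hA hB hA2 ⊢
      linarith
  calc (F.card : ℝ) ≤ ((Finset.Ioc ⌊A⌋ ⌊B⌋).card : ℝ) := by exact_mod_cast h1
    _ ≤ _ := h2

private lemma card_pair_le (F : Finset (ℕ × ℕ)) (n : ℕ) (A B : ℝ)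
    (h1 : ∀ x ∈ F, x.1 = n) (h2 : ∀ x ∈ F, A < (x.2 : ℝ) ∧ (x.2 : ℝ) ≤ B) :
    (F.card : ℝ) ≤ max 0 (B - A + 1) := by
  have hinj : Set.InjOn Prod.snd (F : Set (ℕ × ℕ)) := by
    intro x hx y hy hxy
    have := h1 x hx
    have := h1 y hy
    exact Prod.ext (by omega) hxy
  have hcard : F.card = (F.image Prod.snd).card := (Finset.card_image_of_injOn hinj).symm
  rw [hcard]
  apply card_nat_le
  intro m hm
  rcases Finset.mem_image.mp hm with ⟨x, hx, rfl⟩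
  exact h2 x hx

private lemma sum_inv_sq_le (M : ℕ) (hM : 1 ≤ M) (N : ℕ) :
    ∑ n ∈ Finset.Ioc M N, ((n : ℝ) ^ 2)⁻¹ ≤ (M : ℝ)⁻¹ := by
  have hM0 : (0 : ℝ) < M := by exact_mod_cast hM
  rcases le_or_gt N M with h | h
  · rw [Finset.Ioc_eq_empty (by omega)]
    simp only [Finset.sum_empty]
    positivity
  · have key : ∀ K, M ≤ K → ∑ n ∈ Finset.Ioc M K, ((n : ℝ) ^ 2)⁻¹ ≤ (M : ℝ)⁻¹ - (K : ℝ)⁻¹ := by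
      intro K hK
      induction K, hK using Nat.le_induction with
      | base => simp
      | succ K hK ih =>
        rw [Finset.sum_Ioc_succ_top (by omega)]
        have hK0 : (0 : ℝ) < K := by
          have : (1:ℕ) ≤ K := le_trans hM hK
          exact_mod_cast this
        have hstep : (((K : ℝ) + 1) ^ 2)⁻¹ ≤ (K : ℝ)⁻¹ - ((K : ℝ) + 1)⁻¹ := by
          have hd : (K : ℝ)⁻¹ - ((K : ℝ) + 1)⁻¹ = ((K : ℝ) * ((K : ℝ) + 1))⁻¹ := by
            field_simp; ring
          rw [hd]
          apply inv_anti₀ (by positivity)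
          nlinarith
        push_cast
        linarith
    have h1 := key N h.le
    have h2 : (0 : ℝ) ≤ (N : ℝ)⁻¹ := by positivity
    linarith

private lemma nested_to_pairs (s t : Finset ℕ) (p : ℕ → Prop) (q : ℕ → ℕ → Prop)
    [DecidablePred p] [∀ n, DecidablePred (q n)] (F : ℕ → ℕ → ℂ) :
    ∑ n ∈ s.filter p, ∑ m ∈ t.filter (q n), F n m
      = ∑ x ∈ (s ×ˢ t).filter (fun x => p x.1 ∧ q x.1 x.2), F x.1 x.2 := by
  calc ∑ n ∈ s.filter p, ∑ m ∈ t.filter (q n), F n m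
      = ∑ n ∈ s, if p n then ∑ m ∈ t, if q n m then F n m else 0 else 0 := by
        rw [Finset.sum_filter]
        exact Finset.sum_congr rfl fun n _ => by
          by_cases h : p n <;> simp [h, Finset.sum_filter]
    _ = ∑ n ∈ s, ∑ m ∈ t, if p n ∧ q n m then F n m else 0 := by
        refine Finset.sum_congr rfl fun n _ => ?_
        by_cases h : p n <;> simp [h]
    _ = ∑ x ∈ (s ×ˢ t).filter (fun x => p x.1 ∧ q x.1 x.2), F x.1 x.2 := by
        rw [Finset.sum_filter, Finset.sum_product]

set_option maxHeartbeats 12000000 in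
/-- Lemma 2.1 (the covering lemma). -/
theorem jacobi_hyperbolic_covering (c : ℝ) (hc : 0 ≤ c) (δ : ℝ) (hδ0 : 0 < δ) (hδ1 : δ ≤ 1/2) :
    ∃ C : ℝ, 0 < C ∧ ∀ T z : ℝ, 2 ≤ T → 2 ≤ z → z < T ^ δ →
      ∀ a b : ℕ → ℂ, (∀ n, ‖a n‖ ≤ 1) → (∀ m, ‖b m‖ ≤ 1) →
      ‖(
        (∑ n ∈ (Finset.Icc 1 ⌊T⌋₊).filter
            (fun n : ℕ => Odd n ∧ Squarefree n ∧ z < (n : ℝ) ∧ (n : ℝ) ≤ T ^ δ),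
          ∑ m ∈ (Finset.Icc 1 ⌊T⌋₊).filter
            (fun m : ℕ => Odd m ∧ Squarefree m ∧ z < (m : ℝ) ∧ (m : ℝ) ≤ T / (n : ℝ)),
            (((n : ℝ) * (m : ℝ)) ^ c : ℝ) * a n * b m * (jacobiSym n m : ℂ))
        - ∑ k ∈ (Finset.Icc 1 ⌊T⌋₊).filter
            (fun k : ℕ => z ^ ((1 : ℝ)/2) ≤ (k : ℝ) ∧ (k : ℝ) ≤ T ^ δ / z ^ ((1 : ℝ)/2) - 1),
            ∑ n ∈ (Finset.Icc 1 ⌊T⌋₊).filter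
              (fun n : ℕ => Odd n ∧ Squarefree n ∧
                z ^ ((1 : ℝ)/2) * (k : ℝ) < (n : ℝ) ∧ (n : ℝ) ≤ z ^ ((1 : ℝ)/2) * ((k : ℝ) + 1)),
              ∑ m ∈ (Finset.Icc 1 ⌊T⌋₊).filter
                (fun m : ℕ => Odd m ∧ Squarefree m ∧ z < (m : ℝ) ∧
                  (m : ℝ) ≤ T / (z ^ ((1 : ℝ)/2) * ((k : ℝ) + 1))),
                (((n : ℝ) * (m : ℝ)) ^ c : ℝ) * a n * b m * (jacobiSym n m : ℂ))‖
        ≤ C * T ^ (1 + c) / z ^ ((1 : ℝ)/2) := by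
  refine ⟨11, by norm_num, ?_⟩
  intro T z hT hz hzT a b ha hb
  set N := ⌊T⌋₊ with hN
  set w : ℝ := z ^ ((1 : ℝ)/2) with hw
  set s : Finset ℕ := Finset.Icc 1 N with hs
  -- basic positivity facts
  have hT0 : (0 : ℝ) < T := by linarith
  have hT1 : (1 : ℝ) ≤ T := by linarith
  have hz0 : (0 : ℝ) < z := by linarith
  have hw1 : (1 : ℝ) ≤ w := Real.one_le_rpow (by linarith) (by norm_num)
  have hw0 : (0 : ℝ) < w := by linarith
  have hww : w * w = z := by
    rw [hw, ← Real.rpow_add hz0]; norm_num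
  have hTdT : T ^ δ ≤ T := by
    have h1 := Real.rpow_le_rpow_of_exponent_le hT1 (show δ ≤ 1 by linarith)
    simpa using h1
  have hzT' : z ≤ T := le_trans hzT.le hTdT
  have hTdw : T ^ δ * w ≤ T := by
    have h1 : w ≤ T ^ ((1:ℝ)/4) := by
      have h2 : w ≤ (T ^ δ) ^ ((1:ℝ)/2) := by
        rw [hw]; exact Real.rpow_le_rpow hz0.le hzT.le (by norm_num)
      have h3 : (T ^ δ) ^ ((1:ℝ)/2) = T ^ (δ * (1/2 : ℝ)) := by
        rw [← Real.rpow_mul hT0.le]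
      rw [h3] at h2
      exact le_trans h2 (Real.rpow_le_rpow_of_exponent_le hT1 (by linarith))
    have h4 : T ^ δ ≤ T ^ ((1:ℝ)/2) := Real.rpow_le_rpow_of_exponent_le hT1 hδ1
    have h5 : T ^ ((1:ℝ)/2) * T ^ ((1:ℝ)/4) = T ^ ((3:ℝ)/4) := by
      rw [← Real.rpow_add hT0]; norm_num
    have h6 : T ^ ((3:ℝ)/4) ≤ T := by
      have := Real.rpow_le_rpow_of_exponent_le hT1 (show (3:ℝ)/4 ≤ 1 by norm_num)
      simpa using this
    have h7 : (0:ℝ) ≤ T ^ δ := (Real.rpow_pos_of_pos hT0 δ).le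
    have h8 : (0:ℝ) ≤ T ^ ((1:ℝ)/2) := (Real.rpow_pos_of_pos hT0 _).le
    calc T ^ δ * w ≤ T ^ ((1:ℝ)/2) * T ^ ((1:ℝ)/4) := by
          apply mul_le_mul h4 h1 hw0.le h8
      _ = T ^ ((3:ℝ)/4) := h5
      _ ≤ T := h6
  -- the terms and main finsets
  set P : Finset (ℕ × ℕ) := (s ×ˢ s).filter (fun x =>
    (Odd x.1 ∧ Squarefree x.1 ∧ z < (x.1 : ℝ) ∧ (x.1 : ℝ) ≤ T ^ δ) ∧
    (Odd x.2 ∧ Squarefree x.2 ∧ z < (x.2 : ℝ) ∧ (x.2 : ℝ) ≤ T / (x.1 : ℝ))) with hP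
  set R : ℕ → Finset (ℕ × ℕ) := fun k => (s ×ˢ s).filter (fun x =>
    (Odd x.1 ∧ Squarefree x.1 ∧ w * (k : ℝ) < (x.1 : ℝ) ∧ (x.1 : ℝ) ≤ w * ((k : ℝ) + 1)) ∧
    (Odd x.2 ∧ Squarefree x.2 ∧ z < (x.2 : ℝ) ∧ (x.2 : ℝ) ≤ T / (w * ((k : ℝ) + 1)))) with hR
  set Hfin : Finset ℕ := s.filter (fun k => w ≤ (k : ℝ) ∧ (k : ℝ) ≤ T ^ δ / w - 1) with hHfin
  set Q : Finset (ℕ × ℕ) := Hfin.biUnion R with hQ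
  -- conversion of the double sum
  have eq1 : (∑ n ∈ s.filter
            (fun n : ℕ => Odd n ∧ Squarefree n ∧ z < (n : ℝ) ∧ (n : ℝ) ≤ T ^ δ),
          ∑ m ∈ s.filter
            (fun m : ℕ => Odd m ∧ Squarefree m ∧ z < (m : ℝ) ∧ (m : ℝ) ≤ T / (n : ℝ)),
          (((n : ℝ) * (m : ℝ)) ^ c : ℝ) * a n * b m * (jacobiSym n m : ℂ))
        = ∑ x ∈ P, (((x.1 : ℝ) * (x.2 : ℝ)) ^ c : ℝ) * a x.1 * b x.2 * (jacobiSym x.1 x.2 : ℂ) :=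
    nested_to_pairs s s _ _ (fun n m => (((n : ℝ) * (m : ℝ)) ^ c : ℝ) * a n * b m * (jacobiSym n m : ℂ))
  -- disjointness of the rectangles
  have hdisj : (↑Hfin : Set ℕ).PairwiseDisjoint R := by
    intro k hk k' hk' hne
    simp only [Function.onFun, Finset.disjoint_left]
    intro x hx hx'
    rw [hR] at hx hx'
    simp only [Finset.mem_filter] at hx hx'
    obtain ⟨-, ⟨-, -, h1, h2⟩, -⟩ := hx
    obtain ⟨-, ⟨-, -, h1', h2'⟩, -⟩ := hx'
    apply hne
    have e1 : (k : ℝ) < (k' : ℝ) + 1 := by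
      have := lt_of_lt_of_le h1 h2'
      nlinarith
    have e2 : (k' : ℝ) < (k : ℝ) + 1 := by
      have := lt_of_lt_of_le h1' h2
      nlinarith
    have : k < k' + 1 := by exact_mod_cast e1
    have : k' < k + 1 := by exact_mod_cast e2
    omega
  -- conversion of the triple sum
  have eq2 : (∑ k ∈ Hfin,
            ∑ n ∈ s.filter
              (fun n : ℕ => Odd n ∧ Squarefree n ∧
                w * (k : ℝ) < (n : ℝ) ∧ (n : ℝ) ≤ w * ((k : ℝ) + 1)),
              ∑ m ∈ s.filter
                (fun m : ℕ => Odd m ∧ Squarefree m ∧ z < (m : ℝ) ∧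
                  (m : ℝ) ≤ T / (w * ((k : ℝ) + 1))),
                (((n : ℝ) * (m : ℝ)) ^ c : ℝ) * a n * b m * (jacobiSym n m : ℂ))
        = ∑ x ∈ Q, (((x.1 : ℝ) * (x.2 : ℝ)) ^ c : ℝ) * a x.1 * b x.2 * (jacobiSym x.1 x.2 : ℂ) := by
    rw [hQ, Finset.sum_biUnion hdisj]
    exact Finset.sum_congr rfl fun k _ => nested_to_pairs s s _ _
      (fun n m => (((n : ℝ) * (m : ℝ)) ^ c : ℝ) * a n * b m * (jacobiSym n m : ℂ))
  -- Q is contained in P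
  have hQP : Q ⊆ P := by
    intro x hx
    rw [hQ] at hx
    rcases Finset.mem_biUnion.mp hx with ⟨k, hk, hxk⟩
    rw [hHfin] at hk
    rcases Finset.mem_filter.mp hk with ⟨hks, hkw, hkT⟩
    rw [hR] at hxk
    rcases Finset.mem_filter.mp hxk with ⟨hxs, ⟨ho1, hs1, hn1, hn2⟩, ho2, hs2, hm1, hm2⟩
    have hx1pos : (0 : ℝ) < (x.1 : ℝ) := by
      have := (Finset.mem_product.mp hxs).1
      rw [hs] at this
      have := (Finset.mem_Icc.mp this).1
      exact_mod_cast this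
    have hwk1 : w * ((k : ℝ) + 1) ≤ T ^ δ := by
      have h1 : (k : ℝ) + 1 ≤ T ^ δ / w := by linarith
      calc w * ((k : ℝ) + 1) ≤ w * (T ^ δ / w) := by nlinarith
        _ = T ^ δ := by field_simp
    refine Finset.mem_filter.mpr ⟨hxs, ⟨ho1, hs1, ?_, le_trans hn2 hwk1⟩, ho2, hs2, hm1, ?_⟩
    · have : w * w ≤ w * (k : ℝ) := by nlinarith
      linarith [hww]
    · exact le_trans hm2 (div_le_div_of_nonneg_left hT0.le hx1pos hn2)
  -- term bound on P
  have hFle : ∀ x ∈ P, ‖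
      ((((x.1 : ℝ) * (x.2 : ℝ)) ^ c : ℝ) * a x.1 * b x.2 * (jacobiSym x.1 x.2 : ℂ))‖ ≤ T ^ c := by
    intro x hx
    rw [hP] at hx
    rcases Finset.mem_filter.mp hx with ⟨hxs, ⟨-, -, hn1, -⟩, -, -, hm1, hm2⟩
    have hx1 : (1 : ℝ) ≤ (x.1 : ℝ) := by
      have := (Finset.mem_product.mp hxs).1
      rw [hs] at this
      exact_mod_cast (Finset.mem_Icc.mp this).1
    have hx2 : (1 : ℝ) ≤ (x.2 : ℝ) := by
      have := (Finset.mem_product.mp hxs).2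
      rw [hs] at this
      exact_mod_cast (Finset.mem_Icc.mp this).1
    have hx1p : (0 : ℝ) < (x.1 : ℝ) := by linarith
    have hnm : (x.1 : ℝ) * (x.2 : ℝ) ≤ T := by
      have h1 : (x.1 : ℝ) * (x.2 : ℝ) ≤ (x.1 : ℝ) * (T / (x.1 : ℝ)) := by nlinarith
      rwa [mul_div_cancel₀ _ (ne_of_gt hx1p)] at h1
    have h1 : ‖((((x.1 : ℝ) * (x.2 : ℝ)) ^ c : ℝ) : ℂ)‖ ≤ T ^ c := by
      rw [Complex.norm_real, Real.norm_eq_abs, abs_of_nonneg (Real.rpow_nonneg (by positivity) c)]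
      exact Real.rpow_le_rpow (by positivity) hnm hc
    have h4 := jac_abs_le (x.1 : ℤ) x.2
    have hTc : (0 : ℝ) ≤ T ^ c := (Real.rpow_pos_of_pos hT0 c).le
    simp only [norm_mul]
    calc ‖((((x.1 : ℝ) * (x.2 : ℝ)) ^ c : ℝ) : ℂ)‖ * ‖a x.1‖
          * ‖b x.2‖ * ‖(((jacobiSym (x.1 : ℤ) x.2 : ℤ)) : ℂ)‖
        ≤ T ^ c * 1 * 1 * 1 := by
          gcongr <;> first | exact h1 | exact ha x.1 | exact hb x.2 | exact h4 | positivity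
      _ = T ^ c := by ring
  -- cardinality bound for the uncovered region
  set s' : Finset ℕ := s.filter (fun n => z < (n : ℝ) ∧ (n : ℝ) ≤ T ^ δ) with hs'
  have hfib0 : (P \ Q).card = ∑ n ∈ s', ((P \ Q).filter (fun x => x.1 = n)).card := by
    apply Finset.card_eq_sum_card_fiberwise
    intro x hx
    have hx' := (Finset.mem_sdiff.mp hx).1
    rw [hP] at hx'
    rcases Finset.mem_filter.mp hx' with ⟨hxs, ⟨-, -, h1, h2⟩, -⟩
    rw [hs']
    exact Finset.mem_filter.mpr ⟨(Finset.mem_product.mp hxs).1, h1, h2⟩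
  set good : ℕ → Prop := fun n => z + w ≤ (n : ℝ) ∧ (n : ℝ) ≤ T ^ δ - w with hgood
  -- good fibers
  have hGood : ∀ n ∈ s'.filter good, (((P \ Q).filter (fun x => x.1 = n)).card : ℝ)
      ≤ T * w * ((n : ℝ) ^ 2)⁻¹ + 1 := by
    intro n hn
    rcases Finset.mem_filter.mp hn with ⟨hns', hg⟩
    rw [hgood] at hg
    rcases hg with ⟨hg1, hg2⟩
    rw [hs'] at hns'
    rcases Finset.mem_filter.mp hns' with ⟨hnss, hnz, hnT⟩
    have hn1 : 1 ≤ n := by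
      rw [hs] at hnss; exact (Finset.mem_Icc.mp hnss).1
    have hnN : n ≤ N := by
      rw [hs] at hnss; exact (Finset.mem_Icc.mp hnss).2
    have hn0 : (0 : ℝ) < (n : ℝ) := by exact_mod_cast hn1
    set c₀ : ℕ := ⌈(n : ℝ) / w⌉₊ with hc₀
    have hr1 : w + 1 ≤ (n : ℝ) / w := by
      rw [le_div_iff₀ hw0]; nlinarith [hww]
    have hrpos : (0 : ℝ) ≤ (n : ℝ) / w := by positivity
    have hc₀2 : 2 ≤ c₀ := by
      have h1 : (1 : ℕ) < c₀ := Nat.lt_ceil.mpr (by push_cast; linarith)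
      omega
    set k : ℕ := c₀ - 1 with hk
    have hkcast : (k : ℝ) = (c₀ : ℝ) - 1 := by
      rw [hk, Nat.cast_sub (by omega)]; norm_num
    have hceil_ge : (n : ℝ) / w ≤ (c₀ : ℝ) := Nat.le_ceil _
    have hceil_lt : (c₀ : ℝ) < (n : ℝ) / w + 1 := Nat.ceil_lt_add_one hrpos
    have hwk_lt : w * (k : ℝ) < (n : ℝ) := by
      have h1 : (k : ℝ) < (n : ℝ) / w := by rw [hkcast]; linarith
      calc w * (k : ℝ) < w * ((n : ℝ) / w) := by nlinarith
        _ = (n : ℝ) := by field_simp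
    have hn_le : (n : ℝ) ≤ w * ((k : ℝ) + 1) := by
      have h1 : (n : ℝ) / w ≤ (k : ℝ) + 1 := by rw [hkcast]; linarith
      calc (n : ℝ) = w * ((n : ℝ) / w) := by field_simp
        _ ≤ w * ((k : ℝ) + 1) := by nlinarith
    have hw_le_k : w ≤ (k : ℝ) := by rw [hkcast]; linarith
    have hk_le : (k : ℝ) ≤ T ^ δ / w - 1 := by
      rw [hkcast]
      have h2 : (n : ℝ) / w ≤ (T ^ δ - w) / w := by
        gcongr
      have h3 : (T ^ δ - w) / w = T ^ δ / w - 1 := by field_simp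
      linarith
    have hkN : k ∈ s := by
      have hcn : c₀ ≤ n := Nat.ceil_le.mpr (div_le_self hn0.le hw1)
      rw [hs]
      exact Finset.mem_Icc.mpr ⟨by omega, by omega⟩
    have hkH : k ∈ Hfin := by
      rw [hHfin]; exact Finset.mem_filter.mpr ⟨hkN, hw_le_k, hk_le⟩
    set u : ℝ := w * ((k : ℝ) + 1) with hu
    have hu_n : (n : ℝ) ≤ u := hn_le
    have hu0 : (0 : ℝ) < u := lt_of_lt_of_le hn0 hu_n
    have huexp : u = w * (k : ℝ) + w := by rw [hu]; ring
    have hun : u - (n : ℝ) ≤ w := by linarith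
    have hsubfib : ∀ x ∈ (P \ Q).filter (fun x => x.1 = n),
        T / u < (x.2 : ℝ) ∧ (x.2 : ℝ) ≤ T / (n : ℝ) := by
      intro x hx
      rcases Finset.mem_filter.mp hx with ⟨hxPQ, hxn⟩
      rcases Finset.mem_sdiff.mp hxPQ with ⟨hxP, hxQ⟩
      rw [hP] at hxP
      rcases Finset.mem_filter.mp hxP with ⟨hxs, ⟨ho1, hsf1, -, -⟩, ho2, hsf2, hm1, hm2⟩
      constructor
      · by_contra hcon
        push_neg at hcon
        apply hxQ
        rw [hQ]
        refine Finset.mem_biUnion.mpr ⟨k, hkH, ?_⟩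
        rw [hR]
        refine Finset.mem_filter.mpr ⟨hxs, ⟨ho1, hsf1, ?_, ?_⟩, ho2, hsf2, hm1, ?_⟩
        · rw [hxn]; exact hwk_lt
        · rw [hxn]; exact hn_le
        · rw [← hu]; exact hcon
      · rw [hxn] at hm2; exact hm2
    have hcb := card_pair_le _ n (T / u) (T / (n : ℝ))
      (fun x hx => (Finset.mem_filter.mp hx).2) hsubfib
    refine le_trans hcb ?_
    have hmain : T / (n : ℝ) - T / u ≤ T * w * ((n : ℝ) ^ 2)⁻¹ := by
      rw [div_sub_div _ _ (ne_of_gt hn0) (ne_of_gt hu0)]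
      have h9 : T * u - (n : ℝ) * T ≤ T * w := by nlinarith
      have h10 : (n : ℝ) * (n : ℝ) ≤ (n : ℝ) * u := by nlinarith
      calc (T * u - (n : ℝ) * T) / ((n : ℝ) * u) ≤ (T * w) / ((n : ℝ) * (n : ℝ)) :=
            div_le_div₀ (by positivity) h9 (by positivity) h10
        _ = T * w * ((n : ℝ) ^ 2)⁻¹ := by field_simp
    exact max_le (by positivity) (by linarith)
  -- bad fibers
  have hBad : ∀ n ∈ s'.filter (fun n => ¬ good n),
      (((P \ Q).filter (fun x => x.1 = n)).card : ℝ) ≤ T / z := by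
    intro n hn
    rcases Finset.mem_filter.mp hn with ⟨hns', -⟩
    rw [hs'] at hns'
    rcases Finset.mem_filter.mp hns' with ⟨hnss, hnz, hnT⟩
    have hn1 : 1 ≤ n := by
      rw [hs] at hnss; exact (Finset.mem_Icc.mp hnss).1
    have hn0 : (0 : ℝ) < (n : ℝ) := by exact_mod_cast hn1
    have hsubfib : ∀ x ∈ (P \ Q).filter (fun x => x.1 = n),
        z < (x.2 : ℝ) ∧ (x.2 : ℝ) ≤ T / (n : ℝ) := by
      intro x hx
      rcases Finset.mem_filter.mp hx with ⟨hxPQ, hxn⟩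
      have hxP := (Finset.mem_sdiff.mp hxPQ).1
      rw [hP] at hxP
      rcases Finset.mem_filter.mp hxP with ⟨-, -, -, -, hm1, hm2⟩
      rw [hxn] at hm2
      exact ⟨hm1, hm2⟩
    have hcb := card_pair_le _ n z (T / (n : ℝ))
      (fun x hx => (Finset.mem_filter.mp hx).2) hsubfib
    refine le_trans hcb (max_le (by positivity) ?_)
    have hTn : T / (n : ℝ) ≤ T / z := div_le_div_of_nonneg_left hT0.le hz0 hnz.le
    have hTz1 : (1 : ℝ) ≤ T / z := (le_div_iff₀ hz0).mpr (by linarith)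
    linarith
  -- count of bad n
  have hbadcard : (((s'.filter (fun n => ¬ good n)).card : ℝ)) ≤ 4 * w := by
    have hsub : s'.filter (fun n => ¬ good n) ⊆
        (s'.filter (fun n : ℕ => (n : ℝ) ≤ z + w)) ∪ (s'.filter (fun n : ℕ => T ^ δ - w < (n : ℝ))) := by
      intro n hn
      rcases Finset.mem_filter.mp hn with ⟨hns', hng⟩
      rw [hgood] at hng
      rw [Finset.mem_union]
      rcases not_and_or.mp hng with h | h
      · exact Or.inl (Finset.mem_filter.mpr ⟨hns', by push_neg at h; linarith⟩)
      · exact Or.inr (Finset.mem_filter.mpr ⟨hns', by push_neg at h; linarith⟩)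
    have h1 : ((s'.filter (fun n : ℕ => (n : ℝ) ≤ z + w)).card : ℝ) ≤ w + 1 := by
      refine le_trans (card_nat_le _ z (z + w) ?_) (max_le (by linarith) (by linarith))
      intro m hm
      rcases Finset.mem_filter.mp hm with ⟨hms', hm2⟩
      rw [hs'] at hms'
      exact ⟨(Finset.mem_filter.mp hms').2.1, hm2⟩
    have h2 : ((s'.filter (fun n : ℕ => T ^ δ - w < (n : ℝ))).card : ℝ) ≤ w + 1 := by
      refine le_trans (card_nat_le _ (T ^ δ - w) (T ^ δ) ?_) (max_le (by linarith) (by linarith))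
      intro m hm
      rcases Finset.mem_filter.mp hm with ⟨hms', hm2⟩
      rw [hs'] at hms'
      exact ⟨hm2, (Finset.mem_filter.mp hms').2.2⟩
    have h3 := Finset.card_le_card hsub
    have h4 := Finset.card_union_le (s'.filter (fun n : ℕ => (n : ℝ) ≤ z + w))
      (s'.filter (fun n : ℕ => T ^ δ - w < (n : ℝ)))
    have h5 : ((s'.filter (fun n => ¬ good n)).card : ℝ)
        ≤ ((s'.filter (fun n : ℕ => (n : ℝ) ≤ z + w)).card : ℝ)
          + ((s'.filter (fun n : ℕ => T ^ δ - w < (n : ℝ))).card : ℝ) := by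
      exact_mod_cast le_trans h3 h4
    linarith
  -- count of all n in s'
  have hscard : ((s'.card : ℝ)) ≤ T / w := by
    have h1 : ((s'.card : ℝ)) ≤ max 0 (T ^ δ - z + 1) := by
      apply card_nat_le
      intro m hm
      rw [hs'] at hm
      exact (Finset.mem_filter.mp hm).2
    have hTd0 : (0 : ℝ) ≤ T ^ δ := (Real.rpow_pos_of_pos hT0 δ).le
    have h2 : T ^ δ ≤ T / w := (le_div_iff₀ hw0).mpr hTdw
    exact le_trans h1 (max_le (by positivity) (by linarith))
  -- sum over inverse squares
  have hinvsq : ∑ n ∈ s'.filter good, ((n : ℝ) ^ 2)⁻¹ ≤ 2 / z := by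
    have hMz : 1 ≤ ⌊z⌋₊ := Nat.le_floor (by exact_mod_cast (by linarith : (1:ℝ) ≤ z))
    have hsub : s'.filter good ⊆ Finset.Ioc ⌊z⌋₊ N := by
      intro n hn
      have hns' := (Finset.mem_filter.mp hn).1
      rw [hs'] at hns'
      rcases Finset.mem_filter.mp hns' with ⟨hnss, hnz, -⟩
      rw [hs] at hnss
      exact Finset.mem_Ioc.mpr ⟨(Nat.floor_lt hz0.le).mpr hnz, (Finset.mem_Icc.mp hnss).2⟩
    have h1 : ∑ n ∈ s'.filter good, ((n : ℝ) ^ 2)⁻¹ ≤ ∑ n ∈ Finset.Ioc ⌊z⌋₊ N, ((n : ℝ) ^ 2)⁻¹ :=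
      Finset.sum_le_sum_of_subset_of_nonneg hsub (fun i _ _ => by positivity)
    have h2 := sum_inv_sq_le ⌊z⌋₊ hMz N
    have h3 : ((⌊z⌋₊ : ℝ))⁻¹ ≤ 2 / z := by
      have h4 : z < (⌊z⌋₊ : ℝ) + 1 := Nat.lt_floor_add_one z
      have h5 : z / 2 ≤ (⌊z⌋₊ : ℝ) := by linarith
      have h6 : (0 : ℝ) < z / 2 := by linarith
      calc ((⌊z⌋₊ : ℝ))⁻¹ ≤ (z / 2)⁻¹ := by
            apply inv_anti₀ h6 h5
        _ = 2 / z := by field_simp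
    linarith
  -- total cardinality bound
  have hcard : (((P \ Q).card : ℝ)) ≤ 11 * T / w := by
    have hc1 : (((P \ Q).card : ℝ)) = ∑ n ∈ s', (((P \ Q).filter (fun x => x.1 = n)).card : ℝ) := by
      rw [hfib0]; push_cast; rfl
    rw [hc1, ← Finset.sum_filter_add_sum_filter_not s' good]
    have hA : ∑ n ∈ s'.filter good, (((P \ Q).filter (fun x => x.1 = n)).card : ℝ)
        ≤ ∑ n ∈ s'.filter good, (T * w * ((n : ℝ) ^ 2)⁻¹ + 1) := Finset.sum_le_sum hGood
    have hA2 : ∑ n ∈ s'.filter good, (T * w * ((n : ℝ) ^ 2)⁻¹ + 1)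
        = T * w * (∑ n ∈ s'.filter good, ((n : ℝ) ^ 2)⁻¹) + ((s'.filter good).card : ℝ) := by
      rw [Finset.sum_add_distrib, ← Finset.mul_sum, Finset.sum_const, nsmul_eq_mul, mul_one]
    have hA3 : T * w * (∑ n ∈ s'.filter good, ((n : ℝ) ^ 2)⁻¹) ≤ 2 * T / w := by
      have h1 : T * w * (∑ n ∈ s'.filter good, ((n : ℝ) ^ 2)⁻¹) ≤ T * w * (2 / z) := by
        apply mul_le_mul_of_nonneg_left hinvsq (by positivity)
      have h2 : T * w * (2 / z) = 2 * T / w := by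
        rw [← hww]; field_simp
      linarith
    have hA4 : ((s'.filter good).card : ℝ) ≤ T / w := by
      refine le_trans ?_ hscard
      exact_mod_cast Finset.card_le_card (Finset.filter_subset _ _)
    have hB : ∑ n ∈ s'.filter (fun n => ¬ good n),
        (((P \ Q).filter (fun x => x.1 = n)).card : ℝ)
        ≤ ∑ n ∈ s'.filter (fun n => ¬ good n), (T / z) := Finset.sum_le_sum hBad
    have hB2 : ∑ n ∈ s'.filter (fun n => ¬ good n), (T / z)
        = ((s'.filter (fun n => ¬ good n)).card : ℝ) * (T / z) := by
      rw [Finset.sum_const, nsmul_eq_mul]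
    have hTz0 : (0 : ℝ) ≤ T / z := by positivity
    have hB3 : ((s'.filter (fun n => ¬ good n)).card : ℝ) * (T / z) ≤ 4 * w * (T / z) :=
      mul_le_mul_of_nonneg_right hbadcard hTz0
    have hB4 : 4 * w * (T / z) = 4 * T / w := by
      rw [← hww]; field_simp
    have hTw0 : (0 : ℝ) < T / w := by positivity
    have hfin : T / w + (2 * T / w + T / w + 4 * T / w) ≤ 11 * T / w := by
      have h8 : T / w + (2 * T / w + T / w + 4 * T / w) = 8 * (T / w) := by ring
      have h9 : 11 * T / w = 11 * (T / w) := by ring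
      linarith
    nlinarith [hA, hA2, hA3, hA4, hB, hB2, hB3, hB4]
  -- final assembly
  rw [eq1, eq2, ← Finset.sum_sdiff hQP, add_sub_cancel_right]
  calc ‖(∑ x ∈ P \ Q,
        ((((x.1 : ℝ) * (x.2 : ℝ)) ^ c : ℝ) * a x.1 * b x.2 * (jacobiSym x.1 x.2 : ℂ)))‖
      ≤ ∑ x ∈ P \ Q, ‖
        ((((x.1 : ℝ) * (x.2 : ℝ)) ^ c : ℝ) * a x.1 * b x.2 * (jacobiSym x.1 x.2 : ℂ))‖ :=
        norm_sum_le _ _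
    _ ≤ ∑ _x ∈ P \ Q, T ^ c :=
        Finset.sum_le_sum (fun x hx => hFle x (Finset.mem_sdiff.mp hx).1)
    _ = ((P \ Q).card : ℝ) * T ^ c := by rw [Finset.sum_const, nsmul_eq_mul]
    _ ≤ (11 * T / w) * T ^ c :=
        mul_le_mul_of_nonneg_right hcard (Real.rpow_pos_of_pos hT0 c).le
    _ = 11 * T ^ (1 + c) / w := by
        rw [Real.rpow_add hT0, Real.rpow_one]; ring
end

section
/- There exist an absolute constant κ > 0 and T₀ ≥ 2 such that for all real T ≥ T₀, all real z with 2 ≤ z ≤ T^{1/4}, and every odd prime p with z < p ≤ 2z, the following holds: setting a_n = (n/p) for all n and b_m = 1 if m = p and b_m = 0 otherwise, one has ∑*_{z < n,m ≤ T, nm ≤ T} a_n b_m (n/m) ≥ κ · T/z, where the sum is over pairs (n,m) of odd square-free integers with z < n ≤ T, z < m ≤ T and nm ≤ T. In particular, the exponent 1/4 of z in the bound T(log T)/z^{1/4} cannot be improved beyond 1. -/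
open Finset
open scoped Classical

lemma aux_sum_sq (k : ℕ) :
    ∑ d ∈ Finset.Icc 3 (k+2), (1:ℝ)/(d:ℝ)^2 ≤ 1/2 - 1/((k:ℝ)+2) := by
  induction k with
  | zero => simp
  | succ k ih =>
    have hstep : ∑ d ∈ Finset.Icc 3 (k+3), (1:ℝ)/(d:ℝ)^2
        = (∑ d ∈ Finset.Icc 3 (k+2), (1:ℝ)/(d:ℝ)^2) + 1/((k:ℝ)+3)^2 := by
      rw [show k+3 = (k+2)+1 from rfl, Finset.sum_Icc_succ_top (by omega)]
      push_cast; ring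
    rw [show k+1+2 = k+3 from rfl, hstep]
    have h1 : (1:ℝ)/((k:ℝ)+3)^2 ≤ 1/((k:ℝ)+2) - 1/((k:ℝ)+3) := by
      have hk2 : (0:ℝ) < (k:ℝ)+2 := by positivity
      have hk3 : (0:ℝ) < (k:ℝ)+3 := by positivity
      rw [div_sub_div _ _ (ne_of_gt hk2) (ne_of_gt hk3), div_le_div_iff₀ (by positivity) (by positivity)]
      ring_nf
      nlinarith
    have h2 : ((k:ℝ)+1)+2 = (k:ℝ)+3 := by ring
    push_cast
    rw [h2]
    linarith

lemma sum_inv_sq_le_s9 (M : ℕ) : ∑ d ∈ Finset.Icc 3 M, (1:ℝ)/(d:ℝ)^2 ≤ 1/2 := by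
  rcases le_or_gt M 2 with h | h
  · rw [Finset.Icc_eq_empty (by omega)]
    norm_num
  · obtain ⟨k, rfl⟩ : ∃ k, M = k + 2 := ⟨M - 2, by omega⟩
    have := aux_sum_sq k
    have : (0:ℝ) < (k:ℝ)+2 := by positivity
    have := aux_sum_sq k
    have hpos : (0:ℝ) ≤ 1/((k:ℝ)+2) := by positivity
    linarith

lemma card_odd_Icc_le (M : ℕ) : ((Finset.Icc 1 M).filter (fun n => Odd n)).card ≤ M/2 + 1 := by
  have h : ((Finset.Icc 1 M).filter (fun n => Odd n)).card ≤ (Finset.range (M/2+1)).card := by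
    apply Finset.card_le_card_of_injOn (fun n => n/2)
    · intro n hn
      simp only [Finset.mem_coe, Finset.mem_filter, Finset.mem_Icc, Nat.odd_iff] at hn
      simp only [Finset.mem_coe, Finset.mem_range]
      omega
    · intro a ha b hb hab
      simp only [Finset.coe_filter, Set.mem_setOf_eq, Finset.mem_Icc, Nat.odd_iff] at ha hb
      simp only at hab
      omega
  simpa using h

lemma card_odd_dvd_le (Z N m : ℕ) (hm : 0 < m) :
    (((Finset.Ioc Z N).filter (fun n => Odd n ∧ m ∣ n)).card : ℝ) ≤ (N:ℝ)/(2*m) + 1 := by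
  have h1 : ((Finset.Ioc Z N).filter (fun n => Odd n ∧ m ∣ n)).card
      ≤ ((Finset.Icc 1 (N/m)).filter (fun n => Odd n)).card := by
    apply Finset.card_le_card_of_injOn (fun n => n/m)
    · intro n hn
      simp only [Finset.mem_coe, Finset.mem_filter, Finset.mem_Ioc, Finset.mem_Icc] at hn ⊢
      obtain ⟨⟨hn1, hn2⟩, hodd, hdvd⟩ := hn
      refine ⟨⟨?_, Nat.div_le_div_right hn2⟩, ?_⟩
      · have : m ≤ n := Nat.le_of_dvd (by omega) hdvd
        exact Nat.one_le_div_iff hm |>.mpr this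
      · obtain ⟨c, rfl⟩ := hdvd
        rw [Nat.mul_div_cancel_left _ hm]
        exact (Nat.odd_mul.mp hodd).2
    · intro a ha b hb hab
      simp only [Finset.coe_filter, Set.mem_setOf_eq, Finset.mem_Ioc] at ha hb
      simp only at hab
      have ha' := Nat.div_mul_cancel ha.2.2
      have hb' := Nat.div_mul_cancel hb.2.2
      rw [← ha', ← hb', hab]
  have h2 := card_odd_Icc_le (N/m)
  have h3 : N/m/2 = N/(2*m) := by rw [Nat.div_div_eq_div_mul, Nat.mul_comm]
  have h4 : ((N/(2*m) : ℕ) : ℝ) ≤ (N:ℝ)/(2*m) := by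
    have := Nat.cast_div_le (m := N) (n := 2*m) (α := ℝ)
    simpa using this
  have h5 : (((Finset.Ioc Z N).filter (fun n => Odd n ∧ m ∣ n)).card : ℝ)
      ≤ ((N/(2*m) : ℕ) : ℝ) + 1 := by
    rw [h3] at h2
    exact_mod_cast le_trans h1 (le_trans h2 (by omega))
  linarith

lemma card_odd_Ioc_ge (Z N : ℕ) (h : Z + 4 ≤ N) :
    (N:ℝ)/2 - (Z:ℝ)/2 - 2 ≤ (((Finset.Ioc Z N).filter (fun n => Odd n)).card : ℝ) := by
  have hsub : (Finset.Icc (Z/2+1) ((N-1)/2)).image (fun k => 2*k+1)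
      ⊆ (Finset.Ioc Z N).filter (fun n => Odd n) := by
    intro n hn
    simp only [Finset.mem_image, Finset.mem_Icc] at hn
    obtain ⟨k, ⟨hk1, hk2⟩, rfl⟩ := hn
    simp only [Finset.mem_filter, Finset.mem_Ioc, Nat.odd_iff]
    omega
  have hinj : Set.InjOn (fun k => 2*k+1) (Finset.Icc (Z/2+1) ((N-1)/2)) := by
    intro a _ b _ hab
    simp only at hab
    omega
  have hcard := Finset.card_le_card hsub
  rw [Finset.card_image_of_injOn hinj, Nat.card_Icc] at hcard
  have hnat : N ≤ 2 * ((Finset.Ioc Z N).filter (fun n => Odd n)).card + Z + 4 := by omega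
  have hc : (N:ℝ) ≤ 2 * (((Finset.Ioc Z N).filter (fun n => Odd n)).card : ℝ) + Z + 4 := by
    exact_mod_cast hnat
  linarith

set_option maxHeartbeats 1000000 in
/-- the lower-bound example showing the exponent of z cannot exceed 1. -/
theorem jacobi_hyperbolic_lower_bound_example :
    ∃ κ : ℝ, 0 < κ ∧ ∃ T₀ : ℝ, 2 ≤ T₀ ∧
      ∀ T : ℝ, T₀ ≤ T → ∀ z : ℝ, 2 ≤ z → z ≤ T ^ ((1 : ℝ)/4) →
      ∀ p : ℕ, p.Prime → Odd p → z < (p : ℝ) → (p : ℝ) ≤ 2 * z →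
      κ * (T / z) ≤
        ∑ q ∈ (Finset.Icc 1 ⌊T⌋₊ ×ˢ Finset.Icc 1 ⌊T⌋₊).filter
            (fun q : ℕ × ℕ => Odd q.1 ∧ Squarefree q.1 ∧ Odd q.2 ∧ Squarefree q.2 ∧
              z < (q.1 : ℝ) ∧ z < (q.2 : ℝ) ∧ (q.1 : ℝ) * (q.2 : ℝ) ≤ T),
          (jacobiSym q.1 p : ℝ) * (if q.2 = p then 1 else 0) * (jacobiSym q.1 q.2 : ℝ) := by
  refine ⟨1/48, by norm_num, 2 * 10^9, by norm_num, ?_⟩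
  intro T hT z hz2 hzT p hp hpodd hzp hp2z
  have hTbig : (2:ℝ) * 10^9 ≤ T := hT
  have hTpos : (0:ℝ) < T := by linarith
  have hzpos : (0:ℝ) < z := by linarith
  have hz4 : z^4 ≤ T := by
    have h1 : (T ^ ((1:ℝ)/4))^(4:ℕ) = T := by
      rw [← Real.rpow_natCast (T ^ ((1:ℝ)/4)) 4, ← Real.rpow_mul (le_of_lt hTpos)]
      norm_num
    calc z^4 ≤ (T ^ ((1:ℝ)/4))^(4:ℕ) := by
          exact pow_le_pow_left₀ (by linarith) hzT 4
      _ = T := h1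
  have hzsq : 480 * z^2 ≤ T := by nlinarith [sq_nonneg (z^2 - 480), sq_nonneg z]
  have hp3 : 3 ≤ p := by
    have := hp.two_le
    rcases Nat.odd_iff.mp hpodd with h
    omega
  have hppos : (0:ℝ) < p := by
    have : 0 < p := by omega
    exact_mod_cast this
  have hp6 : (6:ℝ) ≤ 2*p := by
    have : (3:ℝ) ≤ p := by exact_mod_cast hp3
    linarith
  set N := ⌊T/p⌋₊ with hNdef
  set Z := ⌊z⌋₊ with hZdef
  have hNle : (N:ℝ) ≤ T/p := Nat.floor_le (by positivity)
  have hNge : T/p - 1 ≤ (N:ℝ) := by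
    have := Nat.lt_floor_add_one (T/p)
    linarith
  have hZle : (Z:ℝ) ≤ z := Nat.floor_le (le_of_lt hzpos)
  have hzZ : z < (Z:ℝ) + 1 := Nat.lt_floor_add_one z
  have hTp2z : T/(2*z) ≤ T/p := by
    apply div_le_div_of_nonneg_left (le_of_lt hTpos) hppos
    linarith
  have hZN : (Z:ℝ) + 4 ≤ (N:ℝ) := by
    have h1 : (z + 5) * (2*z) ≤ T := by nlinarith
    have h2 : z + 5 ≤ T/(2*z) := by
      rw [le_div_iff₀ (by positivity)]
      exact h1
    linarith
  have hZNnat : Z + 4 ≤ N := by exact_mod_cast hZN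
  have hNT : (N:ℝ) ≤ T := le_trans hNle (by
    rw [div_le_iff₀ hppos]
    nlinarith)
  set s : ℝ := (N.sqrt : ℝ) with hsdef
  have hsnn : 0 ≤ s := Nat.cast_nonneg _
  have hs2 : s^2 ≤ T := by
    have h1 : N.sqrt ^ 2 ≤ N := Nat.sqrt_le' N
    have h2 : s^2 ≤ (N:ℝ) := by rw [hsdef]; exact_mod_cast h1
    linarith
  have hsz : 200 * (s * z) ≤ T := by
    have e1 : s^4 ≤ T^2 := by nlinarith
    have e2 : s^4 * z^4 ≤ T^2 * T :=
      mul_le_mul e1 hz4 (by positivity) (by positivity)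
    have h4 : (200 * (s*z))^4 ≤ T^4 := by
      have e3 : (200 * (s*z))^4 = 1600000000 * (s^4 * z^4) := by ring
      nlinarith [pow_nonneg hTpos.le 3, pow_nonneg hTpos.le 4]
    exact (pow_le_pow_iff_left₀ (by positivity) (le_of_lt hTpos)
      (by norm_num : (4:ℕ) ≠ 0)).mp h4
  have hZ2 : 2 ≤ Z := Nat.le_floor (by exact_mod_cast hz2)
  -- the good set
  set S : Finset ℕ := (Finset.Ioc Z N).filter (fun n => Odd n ∧ Squarefree n ∧ ¬ p ∣ n)
    with hSdef
  have hcount : (1:ℝ)/48 * (T/z) ≤ S.card := by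
    set O : Finset ℕ := (Finset.Ioc Z N).filter (fun n => Odd n) with hO
    set BadSq : Finset ℕ := (Finset.Ioc Z N).filter (fun n => Odd n ∧ ¬ Squarefree n) with hBSq
    set BadP : Finset ℕ := (Finset.Ioc Z N).filter (fun n => Odd n ∧ p ∣ n) with hBP
    have hOsub : O ⊆ S ∪ BadSq ∪ BadP := by
      intro n hn
      simp only [hO, hSdef, hBSq, hBP, Finset.mem_filter, Finset.mem_union] at hn ⊢
      by_cases h1 : Squarefree n
      · by_cases h2 : p ∣ n
        · exact Or.inr ⟨hn.1, hn.2, h2⟩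
        · exact Or.inl (Or.inl ⟨hn.1, hn.2, h1, h2⟩)
      · exact Or.inl (Or.inr ⟨hn.1, hn.2, h1⟩)
    have hcardO : O.card ≤ S.card + BadSq.card + BadP.card := by
      calc O.card ≤ (S ∪ BadSq ∪ BadP).card := Finset.card_le_card hOsub
        _ ≤ (S ∪ BadSq).card + BadP.card := Finset.card_union_le _ _
        _ ≤ S.card + BadSq.card + BadP.card :=
            add_le_add_left (Finset.card_union_le _ _) _
    have hcardOR : ((O.card : ℝ)) ≤ (S.card : ℝ) + BadSq.card + BadP.card := by
      exact_mod_cast hcardO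
    -- BadSq bound
    have hBadSq : (BadSq.card : ℝ) ≤ (N:ℝ)/4 + s := by
      set D : Finset ℕ := (Finset.Icc 3 N.sqrt).filter (fun d => Odd d) with hD
      have hsubB : BadSq ⊆ D.biUnion
          (fun d => (Finset.Ioc Z N).filter (fun n => Odd n ∧ d*d ∣ n)) := by
        intro n hn
        simp only [hBSq, Finset.mem_filter, Finset.mem_Ioc] at hn
        obtain ⟨⟨hn1, hn2⟩, hodd, hnsf⟩ := hn
        rw [Nat.squarefree_iff_prime_squarefree] at hnsf
        push_neg at hnsf
        obtain ⟨r, hr, hrn⟩ := hnsf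
        have hrprime : r.Prime := hr
        have hrodd : Odd r := by
          rcases Nat.even_or_odd r with he | ho
          · exfalso
            have h2r : 2 ∣ r := even_iff_two_dvd.mp he
            have h2n : 2 ∣ n := dvd_trans h2r (dvd_trans (Dvd.intro r rfl) hrn)
            rw [Nat.odd_iff] at hodd
            omega
          · exact ho
        have hr3 : 3 ≤ r := by
          have := hrprime.two_le
          rcases Nat.odd_iff.mp hrodd with h
          omega
        have hrs : r ≤ N.sqrt := by
          rw [Nat.le_sqrt]
          exact le_trans (Nat.le_of_dvd (by omega) hrn) hn2
        rw [Finset.mem_biUnion]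
        refine ⟨r, ?_, ?_⟩
        · simp only [hD, Finset.mem_filter, Finset.mem_Icc]
          exact ⟨⟨hr3, hrs⟩, hrodd⟩
        · simp only [Finset.mem_filter, Finset.mem_Ioc]
          exact ⟨⟨hn1, hn2⟩, hodd, hrn⟩
      have hb1 : (BadSq.card : ℝ) ≤
          ∑ d ∈ D, ((((Finset.Ioc Z N).filter (fun n => Odd n ∧ d*d ∣ n)).card : ℝ)) := by
        have h1 := Finset.card_biUnion_le (s := D)
          (t := fun d => (Finset.Ioc Z N).filter (fun n => Odd n ∧ d*d ∣ n))
        have h2 := Finset.card_le_card hsubB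
        exact_mod_cast le_trans h2 h1
      have hb2 : ∑ d ∈ D, ((((Finset.Ioc Z N).filter (fun n => Odd n ∧ d*d ∣ n)).card : ℝ))
          ≤ ∑ d ∈ D, ((N:ℝ)/2 * (1/(d:ℝ)^2) + 1) := by
        apply Finset.sum_le_sum
        intro d hd
        simp only [hD, Finset.mem_filter, Finset.mem_Icc] at hd
        have hd0 : 0 < d*d := by nlinarith [hd.1.1]
        have hle := card_odd_dvd_le Z N (d*d) hd0
        have hdne : ((d:ℝ)) ≠ 0 := by
          have : 3 ≤ d := hd.1.1
          positivity
        have heq : (N:ℝ)/(2*((d*d : ℕ):ℝ)) = (N:ℝ)/2 * (1/(d:ℝ)^2) := by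
          have e : ((d*d : ℕ):ℝ) = (d:ℝ)^2 := by push_cast; ring
          rw [e, mul_one_div, div_div]
        rw [heq] at hle
        exact hle
      have hb3 : ∑ d ∈ D, ((N:ℝ)/2 * (1/(d:ℝ)^2) + 1)
          = (N:ℝ)/2 * (∑ d ∈ D, 1/(d:ℝ)^2) + D.card := by
        rw [Finset.sum_add_distrib, Finset.mul_sum, Finset.sum_const]
        simp
      have hsum : ∑ d ∈ D, 1/(d:ℝ)^2 ≤ 1/2 := by
        refine le_trans ?_ (sum_inv_sq_le_s9 N.sqrt)
        apply Finset.sum_le_sum_of_subset_of_nonneg (Finset.filter_subset _ _)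
        intro i _ _
        positivity
      have hcardD : (D.card : ℝ) ≤ s := by
        have h1 : D.card ≤ (Finset.Icc 3 N.sqrt).card :=
          Finset.card_le_card (Finset.filter_subset _ _)
        have h2 : (Finset.Icc 3 N.sqrt).card ≤ N.sqrt := by
          rw [Nat.card_Icc]; omega
        have h3 := le_trans h1 h2
        rw [hsdef]
        exact_mod_cast h3
      have hmul : (N:ℝ)/2 * (∑ d ∈ D, 1/(d:ℝ)^2) ≤ (N:ℝ)/2 * (1/2) := by
        apply mul_le_mul_of_nonneg_left hsum (by positivity)
      calc (BadSq.card : ℝ) ≤ _ := hb1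
        _ ≤ _ := hb2
        _ = _ := hb3
        _ ≤ (N:ℝ)/2 * (1/2) + s := by linarith
        _ ≤ (N:ℝ)/4 + s := by linarith
    -- BadP bound
    have hBadP : (BadP.card : ℝ) ≤ (N:ℝ)/6 + 1 := by
      have h1 := card_odd_dvd_le Z N p (by omega)
      have h2 : (N:ℝ)/(2*(p:ℝ)) ≥ 0 := by positivity
      have h3 : (N:ℝ)/(2*(p:ℝ)) ≤ (N:ℝ)/6 := by
        apply div_le_div_of_nonneg_left (Nat.cast_nonneg N) (by norm_num) hp6
      exact le_trans h1 (by linarith)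
    have hOlow := card_odd_Ioc_ge Z N hZNnat
    -- final numeric combination
    have hw1 : (T/z)/2 - 1 ≤ (N:ℝ) := by
      have e : T/(2*z) = (T/z)/2 := by ring
      rw [e] at hTp2z
      linarith
    have hw2 : s ≤ (T/z)/200 := by
      rw [div_div, le_div_iff₀ (by positivity)]
      nlinarith
    have hw3 : z ≤ (T/z)/480 := by
      rw [div_div, le_div_iff₀ (by positivity)]
      nlinarith
    linarith
  -- now relate S.card to the sum
  set F : Finset (ℕ × ℕ) := (Finset.Icc 1 ⌊T⌋₊ ×ˢ Finset.Icc 1 ⌊T⌋₊).filter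
      (fun q : ℕ × ℕ => Odd q.1 ∧ Squarefree q.1 ∧ Odd q.2 ∧ Squarefree q.2 ∧
        z < (q.1 : ℝ) ∧ z < (q.2 : ℝ) ∧ (q.1 : ℝ) * (q.2 : ℝ) ≤ T) with hF
  have himg : S.image (fun n => (n, p)) ⊆ F := by
    intro q hq
    simp only [Finset.mem_image] at hq
    obtain ⟨n, hn, rfl⟩ := hq
    simp only [hSdef, Finset.mem_filter, Finset.mem_Ioc] at hn
    obtain ⟨⟨hn1, hn2⟩, hodd, hsf, hpn⟩ := hn
    have hnz : z < (n:ℝ) := by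
      have : (Z:ℝ) + 1 ≤ (n:ℝ) := by exact_mod_cast hn1
      linarith
    have hnT : (n:ℝ) ≤ T/(p:ℝ) := le_trans (by exact_mod_cast hn2) hNle
    have hnpT : (n:ℝ) * (p:ℝ) ≤ T := by
      rw [← le_div_iff₀ hppos]
      exact hnT
    have hpT : (p:ℝ) ≤ T := by nlinarith
    simp only [hF, Finset.mem_filter, Finset.mem_product, Finset.mem_Icc]
    refine ⟨⟨⟨by omega, ?_⟩, by omega, Nat.le_floor hpT⟩,
      hodd, hsf, hpodd, hp.prime.squarefree, hnz, hzp, hnpT⟩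
    · -- n ≤ ⌊T⌋₊
      have h1 : T/(p:ℝ) ≤ T := by
        apply div_le_self (le_of_lt hTpos)
        exact_mod_cast hp.one_lt.le
      have : N ≤ ⌊T⌋₊ := Nat.floor_le_floor h1
      omega
  have hinj : Set.InjOn (fun n => (n, p)) (S : Set ℕ) := by
    intro a _ b _ hab
    exact (Prod.mk.injEq a p b p).mp hab |>.1
  have hterm : ∀ n ∈ S,
      (jacobiSym (n:ℤ) p : ℝ) * (if p = p then (1:ℝ) else 0) * (jacobiSym (n:ℤ) p : ℝ) = 1 := by
    intro n hn
    simp only [hSdef, Finset.mem_filter] at hn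
    obtain ⟨-, -, -, hpn⟩ := hn
    have hcop : Nat.Coprime p n := (Nat.Prime.coprime_iff_not_dvd hp).mpr hpn
    have hg : ((n:ℤ)).gcd (p:ℤ) = 1 := by
      rw [Int.gcd_natCast_natCast]
      exact hcop.symm
    rw [if_pos rfl]
    rcases jacobiSym.eq_one_or_neg_one hg with h | h <;> rw [h] <;> norm_num
  have hsum_eq : ∑ q ∈ S.image (fun n => (n, p)),
      ((jacobiSym (q.1:ℤ) p : ℝ) * (if q.2 = p then (1:ℝ) else 0) * (jacobiSym (q.1:ℤ) q.2 : ℝ))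
      = (S.card : ℝ) := by
    rw [Finset.sum_image (fun a ha b hb hab => hinj ha hb hab)]
    rw [Finset.sum_congr rfl (fun n hn => hterm n hn)]
    simp
  have hnonneg : ∀ q ∈ F, q ∉ S.image (fun n => (n, p)) →
      0 ≤ (jacobiSym (q.1:ℤ) p : ℝ) * (if q.2 = p then (1:ℝ) else 0) * (jacobiSym (q.1:ℤ) q.2 : ℝ) := by
    intro q _ _
    by_cases h : q.2 = p
    · rw [if_pos h, h, mul_one]
      exact mul_self_nonneg _
    · rw [if_neg h, mul_zero, zero_mul]
  calc (1:ℝ)/48 * (T/z) ≤ (S.card : ℝ) := hcount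
    _ = _ := hsum_eq.symm
    _ ≤ _ := Finset.sum_le_sum_of_subset_of_nonneg himg hnonneg
end

section
/- The series ∑_{k ≥ 1, k odd} φ(k²)/k⁴, taken over odd positive integers k, converges and equals 6ζ(2)/(7ζ(3)), where φ is Euler's totient function and ζ is the Riemann zeta function. -/
open LSeries Complex
open scoped LSeries.notation

lemma my_totient_sq (n : ℕ) : Nat.totient (n ^ 2) = n * Nat.totient n := by
  induction n using Nat.recOnPosPrimePosCoprime with
  | prime_pow p k hp hk =>
      rw [← pow_mul, Nat.totient_prime_pow hp (by omega), Nat.totient_prime_pow hp hk,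
        show p ^ k * (p ^ (k - 1) * (p - 1)) = p ^ (k + (k-1)) * (p-1) by rw [pow_add]; ring,
        show k * 2 - 1 = k + (k - 1) by omega]
  | zero => simp
  | one => simp
  | coprime a b ha hb hab iha ihb =>
      rw [mul_pow, Nat.totient_mul ((Nat.Coprime.pow _ _ hab)), Nat.totient_mul hab, iha, ihb]
      ring

lemma my_term3 (f : ℕ → ℂ) {n : ℕ} (hn : n ≠ 0) :
    LSeries.term f 3 n = f n / (n : ℂ) ^ (3 : ℕ) := by
  rw [LSeries.term_of_ne_zero hn, show (3:ℂ) = ((3:ℕ):ℂ) by norm_num, Complex.cpow_natCast]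

lemma my_phi_summable : LSeriesSummable (fun n => (Nat.totient n : ℂ)) 3 := by
  apply LSeriesSummable_of_le_const_mul_rpow (x := 2) (by norm_num)
  refine ⟨1, fun n hn => ?_⟩
  rw [one_mul, Complex.norm_natCast]
  calc (Nat.totient n : ℝ) ≤ n := by exact_mod_cast Nat.totient_le n
  _ = (n:ℝ) ^ (2-1 : ℝ) := by norm_num

lemma my_LSeries_phi :
    LSeriesHasSum (fun n => (Nat.totient n : ℂ)) 3 (riemannZeta 2 / riemannZeta 3) := by
  have hζ3 := LSeriesHasSum_one (s := 3) (by norm_num)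
  have hconv : (fun n => (Nat.totient n : ℂ)) ⍟ 1 = fun n : ℕ => (n:ℂ) := by
    funext n
    simp only [LSeries.convolution_def, Pi.one_apply, mul_one]
    rw [Nat.sum_divisorsAntidiagonal (f := fun d _ => (Nat.totient d : ℂ)), ← Nat.cast_sum,
      Nat.sum_totient]
  have hid : LSeriesHasSum (fun n => (n:ℂ)) 3 (riemannZeta 2) := by
    have h2 := LSeriesHasSum_one (s := 2) (by norm_num)
    have hterm : ∀ n : ℕ, term (fun n => (n:ℂ)) 3 n = term 1 2 n := by
      intro n
      rcases eq_or_ne n 0 with rfl | hn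
      · simp
      · rw [LSeries.term_of_ne_zero hn, LSeries.term_of_ne_zero hn, Pi.one_apply]
        have hn' : (n:ℂ) ≠ 0 := Nat.cast_ne_zero.mpr hn
        have h2n : (n:ℂ) ^ (2:ℂ) ≠ 0 := by
          simp [Complex.cpow_eq_zero_iff, hn']
        rw [show (3:ℂ) = 2 + 1 by norm_num, Complex.cpow_add _ _ hn', Complex.cpow_one]
        field_simp
    unfold LSeriesHasSum
    rw [funext hterm]
    exact h2
  have hmul := (my_phi_summable.LSeriesHasSum).convolution hζ3
  rw [hconv] at hmul
  have huniq : LSeries (fun n => (Nat.totient n : ℂ)) 3 * riemannZeta 3 = riemannZeta 2 :=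
    HasSum.unique hmul hid
  have hζ3ne : riemannZeta 3 ≠ 0 := riemannZeta_ne_zero_of_one_lt_re (by norm_num)
  have hL : LSeries (fun n => (Nat.totient n : ℂ)) 3 = riemannZeta 2 / riemannZeta 3 := by
    rw [eq_div_iff hζ3ne]; exact huniq
  exact hL ▸ my_phi_summable.LSeriesHasSum

lemma my_inj : Function.Injective (fun p : ℕ × ℕ => 2 ^ p.1 * (2 * p.2 + 1)) := by
  have key : ∀ x y : ℕ, (2 ^ x * (2 * y + 1)).factorization 2 = x := by
    intro x y
    rw [Nat.factorization_mul (pow_ne_zero _ two_ne_zero) (by omega)]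
    simp [Nat.Prime.factorization_pow, Nat.factorization_eq_zero_of_not_dvd
      (Nat.two_not_dvd_two_mul_add_one y), Nat.Prime.factorization Nat.prime_two]
  rintro ⟨a, b⟩ ⟨c, d⟩ h
  simp only at h
  have hac : a = c := by
    have := congrArg (fun n : ℕ => n.factorization 2) h
    rw [key a b, key c d] at this
    exact this
  subst hac
  have hbd : 2 * b + 1 = 2 * d + 1 := Nat.eq_of_mul_eq_mul_left (pow_pos two_pos a) h
  simp only [Prod.mk.injEq]
  exact ⟨trivial, by omega⟩

lemma my_even_factor :
    HasSum (fun a : ℕ => LSeries.term (fun n => (Nat.totient n : ℂ)) 3 (2 ^ a)) (7/6) := by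
  have hgeo : HasSum (fun a : ℕ => (1/2 : ℂ) * (1/4)^a) (2/3) := by
    have h := (hasSum_geometric_of_norm_lt_one (ξ := (1/4:ℂ)) (by norm_num)).mul_left (1/2)
    rw [show (2/3:ℂ) = 1/2 * (1 - 1/4)⁻¹ by norm_num]
    exact h
  have h := hgeo.update 0 1
  have heq : Function.update (fun a : ℕ => (1/2 : ℂ) * (1/4)^a) 0 1
      = fun a : ℕ => LSeries.term (fun n => (Nat.totient n : ℂ)) 3 (2 ^ a) := by
    funext a
    rcases a with _ | b
    · rw [Function.update_self, my_term3 _ (by norm_num)]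
      simp
    · rw [Function.update_of_ne (by omega), my_term3 _ (by positivity)]
      rw [Nat.totient_prime_pow Nat.prime_two (by omega)]
      push_cast
      have h2 : (2:ℂ) ≠ 0 := two_ne_zero
      rw [show (4:ℂ) = 2^2 by norm_num, div_pow, one_pow, ← pow_mul, ← pow_mul,
        div_mul_div_comm, one_mul, ← pow_succ',
        div_eq_div_iff (by simp [h2]) (by simp [h2])]
      rw [mul_one, ← pow_add, show b + (2 * (b + 1) + 1) = (b + 1) * 3 from by ring, one_mul]
  rw [heq] at h
  rw [show (7/6:ℂ) = 1 - 1/2 * (1/4)^0 + 2/3 by norm_num]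
  exact h

/-- evaluation of the constant ∑_{k odd} φ(k²)/k⁴ = 6ζ(2)/(7ζ(3)). -/
theorem totient_sq_series_eval :
    HasSum (fun k : ℕ => if Odd k then (Nat.totient (k ^ 2) : ℂ) / (k : ℂ) ^ 4 else 0)
      (6 * riemannZeta 2 / (7 * riemannZeta 3)) := by
  set fφ : ℕ → ℂ := fun n => (Nat.totient n : ℂ) with hfφ
  have hsum : LSeriesSummable fφ 3 := my_phi_summable
  have hA : LSeriesHasSum fφ 3 (riemannZeta 2 / riemannZeta 3) := my_LSeries_phi
  have hoddinj : Function.Injective (fun b : ℕ => 2 * b + 1) := fun x y h => by simp only at h; omega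
  have hTs : Summable (fun b : ℕ => LSeries.term fφ 3 (2 * b + 1)) :=
    hsum.comp_injective hoddinj
  obtain ⟨T, hT⟩ := hTs
  have hP : Summable ((LSeries.term fφ 3) ∘ (fun p : ℕ × ℕ => 2 ^ p.1 * (2 * p.2 + 1))) :=
    hsum.comp_injective my_inj
  have hfactor : ∀ p : ℕ × ℕ, LSeries.term fφ 3 (2 ^ p.1 * (2 * p.2 + 1))
      = LSeries.term fφ 3 (2 ^ p.1) * LSeries.term fφ 3 (2 * p.2 + 1) := by
    rintro ⟨a, b⟩
    simp only
    rw [my_term3 _ (by positivity), my_term3 _ (by positivity), my_term3 _ (by omega)]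
    rw [hfφ]
    simp only
    rw [Nat.totient_mul (Nat.Coprime.pow_left _ (Nat.coprime_two_left.mpr ⟨b, by ring⟩))]
    push_cast
    rw [mul_pow, mul_div_mul_comm]
  have hmul := my_even_factor.mul hT (by
    rw [show (fun x : ℕ × ℕ => LSeries.term fφ 3 (2 ^ x.1) * LSeries.term fφ 3 (2 * x.2 + 1))
      = (LSeries.term fφ 3) ∘ (fun p : ℕ × ℕ => 2 ^ p.1 * (2 * p.2 + 1)) from
      funext fun p => (hfactor p).symm]
    exact hP)
  have hcomp : HasSum ((LSeries.term fφ 3) ∘ (fun p : ℕ × ℕ => 2 ^ p.1 * (2 * p.2 + 1)))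
      (7/6 * T) := by
    rwa [show ((LSeries.term fφ 3) ∘ fun p : ℕ × ℕ => 2 ^ p.1 * (2 * p.2 + 1))
      = fun x : ℕ × ℕ => LSeries.term fφ 3 (2 ^ x.1) * LSeries.term fφ 3 (2 * x.2 + 1) from
      funext hfactor]
  have hfull : HasSum (LSeries.term fφ 3) (7/6 * T) := by
    refine (Function.Injective.hasSum_iff my_inj ?_).mp hcomp
    intro n hn
    rcases eq_or_ne n 0 with rfl | h0
    · exact LSeries.term_zero ..
    · exfalso
      obtain ⟨k, m, hm, rfl⟩ := Nat.exists_eq_two_pow_mul_odd h0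
      obtain ⟨b, hb⟩ := hm
      exact hn ⟨(k, b), by simp [← hb]⟩
  have hval : 7/6 * T = riemannZeta 2 / riemannZeta 3 := hfull.unique hA
  have hζ3ne : riemannZeta 3 ≠ 0 := riemannZeta_ne_zero_of_one_lt_re (by norm_num)
  have hTval : T = 6 * riemannZeta 2 / (7 * riemannZeta 3) := by
    field_simp at hval ⊢
    linear_combination hval
  rw [← hTval]
  have h0 : ∀ k ∉ Set.range (fun b : ℕ => 2 * b + 1),
      (if Odd k then (Nat.totient (k ^ 2) : ℂ) / (k : ℂ) ^ 4 else 0) = 0 := by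
    intro k hk
    have : ¬ Odd k := by
      contrapose! hk
      obtain ⟨b, hb⟩ := hk
      exact ⟨b, hb.symm⟩
    simp [this]
  refine (Function.Injective.hasSum_iff hoddinj h0).mp ?_
  have hFg : ((fun k : ℕ => if Odd k then ((Nat.totient (k^2) : ℂ)) / (k:ℂ)^4 else 0)
        ∘ (fun b : ℕ => 2 * b + 1))
      = fun b : ℕ => LSeries.term fφ 3 (2 * b + 1) := by
    funext b
    have hodd : Odd (2 * b + 1) := ⟨b, by ring⟩
    simp only [Function.comp_apply, if_pos hodd]
    rw [my_term3 _ (by omega), my_totient_sq, hfφ]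
    simp only
    have hne : ((2 * b + 1 : ℕ) : ℂ) ≠ 0 := by
      exact_mod_cast (by omega : (2 * b + 1 : ℕ) ≠ 0)
    push_cast
    push_cast at hne
    field_simp
  rw [hFg]
  exact hT
end

section
/- For every real number s > 3/2, the series ∑_{k ≥ 1, k odd} φ(k²)/k^{2s}, taken over odd positive integers k, converges and equals ((1 − 2^{2−2s})/(1 − 2^{1−2s})) · ζ(2s−2)/ζ(2s−1), where φ is Euler's totient function and ζ is the Riemann zeta function. -/
open Complex LSeries
open scoped LSeries.notation

private lemma totient_sq_eq' {k : ℕ} (hk : k ≠ 0) :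
    Nat.totient (k ^ 2) = k * Nat.totient k := by
  have h := Nat.totient_gcd_mul_totient_mul k k
  rw [Nat.gcd_self] at h
  have hφ : 0 < Nat.totient k := Nat.totient_pos.mpr (Nat.pos_of_ne_zero hk)
  have h' : Nat.totient k * Nat.totient (k * k) = Nat.totient k * (k * Nat.totient k) := by
    rw [h]; ring
  rw [pow_two]
  exact Nat.eq_of_mul_eq_mul_left hφ h'

private lemma totient_conv' :
    (fun n : ℕ => (Nat.totient n : ℂ)) ⍟ (1 : ℕ → ℂ) = fun n : ℕ => (n : ℂ) := by
  rw [LSeries.convolution_def]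
  funext n
  rcases eq_or_ne n 0 with rfl | hn
  · simp
  · simp only [Pi.one_apply, mul_one]
    rw [Nat.sum_divisorsAntidiagonal (f := fun a _ => (Nat.totient a : ℂ))]
    rw [← Nat.cast_sum]
    rw [Nat.sum_totient]

private lemma lsummable_totient {z : ℂ} (hz : 2 < z.re) :
    LSeriesSummable (fun n : ℕ => (Nat.totient n : ℂ)) z := by
  refine LSeriesSummable_of_le_const_mul_rpow (x := 2) hz ⟨1, fun n hn => ?_⟩
  rw [Complex.norm_natCast]
  have : ((2 : ℝ) - 1) = (1 : ℝ) := by norm_num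
  rw [this, Real.rpow_one, one_mul]
  exact_mod_cast Nat.totient_le n

private lemma hasSum_id' {z : ℂ} (hz : 2 < z.re) :
    LSeriesHasSum (fun n : ℕ => (n : ℂ)) z (riemannZeta (z - 1)) := by
  have h1 : 1 < (z - 1).re := by
    simp only [Complex.sub_re, Complex.one_re]; linarith
  have hone := LSeriesHasSum_one h1
  have hterm : term (fun n : ℕ => (n : ℂ)) z = term (1 : ℕ → ℂ) (z - 1) := by
    funext n
    rcases eq_or_ne n 0 with rfl | hn
    · simp [term]
    · rw [term_of_ne_zero hn, term_of_ne_zero hn, Pi.one_apply]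
      have hn0 : (n : ℂ) ≠ 0 := Nat.cast_ne_zero.mpr hn
      have hz' : (n : ℂ) ^ z = (n : ℂ) ^ (z - 1) * n := by
        rw [show z = (z - 1) + 1 by ring, cpow_add _ _ hn0, cpow_one]
        ring_nf
      rw [hz']
      rw [mul_comm, ← div_div, div_self hn0]
  show HasSum (term (fun n : ℕ => (n : ℂ)) z) _
  rw [hterm]
  exact hone

private lemma hasSum_totient' {z : ℂ} (hz : 2 < z.re) :
    HasSum (term (fun n : ℕ => (Nat.totient n : ℂ)) z)
      (riemannZeta (z - 1) / riemannZeta z) := by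
  have hz1 : 1 < z.re := by linarith
  have hφ := lsummable_totient hz
  have hζ : LSeriesHasSum (1 : ℕ → ℂ) z (riemannZeta z) := LSeriesHasSum_one hz1
  have hconv := LSeriesHasSum.convolution hφ.LSeriesHasSum hζ
  rw [totient_conv'] at hconv
  have huniq : LSeries (fun n : ℕ => (Nat.totient n : ℂ)) z * riemannZeta z
      = riemannZeta (z - 1) := HasSum.unique hconv (hasSum_id' hz)
  have hζ0 : riemannZeta z ≠ 0 := riemannZeta_ne_zero_of_one_lt_re hz1
  have hL : LSeries (fun n : ℕ => (Nat.totient n : ℂ)) z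
      = riemannZeta (z - 1) / riemannZeta z := by
    field_simp [hζ0]
    exact huniq
  have := hφ.LSeriesHasSum
  rwa [LSeriesHasSum, hL] at this

/-- `((2:ℂ)^n)^z = ((2:ℂ)^z)^n`. -/
private lemma two_pow_cpow (z : ℂ) : ∀ n : ℕ, ((2 : ℂ) ^ n) ^ z = ((2 : ℂ) ^ z) ^ n := by
  intro n
  induction n with
  | zero => simp [Complex.one_cpow]
  | succ n ih =>
    have h2 : ((2 : ℂ) ^ (n + 1)) = ((2 ^ n : ℝ) : ℂ) * ((2 : ℝ) : ℂ) := by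
      push_cast; ring
    rw [h2, Complex.mul_cpow_ofReal_nonneg (by positivity) (by norm_num)]
    have h3 : (((2 : ℝ) ^ n : ℝ) : ℂ) = (2 : ℂ) ^ n := by push_cast; ring
    have h4 : (((2 : ℝ)) : ℂ) = (2 : ℂ) := by norm_num
    rw [h3, h4, ih, pow_succ]

private lemma two_adic_val (a b : ℕ) : (2 ^ a * (2 * b + 1)).factorization 2 = a := by
  rw [Nat.factorization_mul (pow_ne_zero _ two_ne_zero) (by omega),
    Nat.Prime.factorization_pow Nat.prime_two]
  have : (2 * b + 1).factorization 2 = 0 :=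
    Nat.factorization_eq_zero_of_not_dvd (by omega)
  simp [this]

/-- Dirichlet series of the odd totient-square function. -/
theorem totient_sq_dirichlet_series (s : ℝ) (hs : 3/2 < s) :
    HasSum (fun k : ℕ => if Odd k then (Nat.totient (k ^ 2) : ℂ) / (k : ℂ) ^ (2 * (s : ℂ)) else 0)
      ((1 - (2 : ℂ) ^ (2 - 2 * (s : ℂ))) / (1 - (2 : ℂ) ^ (1 - 2 * (s : ℂ)))
        * riemannZeta (2 * (s : ℂ) - 2) / riemannZeta (2 * (s : ℂ) - 1)) := by
  set z : ℂ := 2 * (s : ℂ) - 1 with hzdef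
  have hzre : z.re = 2 * s - 1 := by
    simp [hzdef, Complex.sub_re, Complex.mul_re]
  have hz2 : 2 < z.re := by rw [hzre]; linarith
  have hz1 : 1 < z.re := by linarith
  have hζ0 : riemannZeta z ≠ 0 := riemannZeta_ne_zero_of_one_lt_re hz1
  set φC : ℕ → ℂ := fun n => (Nat.totient n : ℂ) with hφC
  have hS : HasSum (term φC z) (riemannZeta (z - 1) / riemannZeta z) := hasSum_totient' hz2
  set S : ℂ := riemannZeta (z - 1) / riemannZeta z with hSdef
  -- the geometric ratio
  set r : ℂ := (2 : ℂ) ^ (1 - z) with hrdef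
  have h2z : (2 : ℂ) ^ z ≠ 0 := by
    intro h
    exact two_ne_zero (Complex.cpow_eq_zero_iff _ _ |>.mp h).1
  have hr_eq : r = 2 * ((2 : ℂ) ^ z)⁻¹ := by
    rw [hrdef, show (1 : ℂ) - z = 1 + -z by ring, Complex.cpow_add _ _ two_ne_zero,
      Complex.cpow_one, Complex.cpow_neg]
  have hr_norm : ‖r‖ < 1 := by
    have : r = ((2 : ℕ) : ℂ) ^ (1 - z) := by norm_num [hrdef]
    rw [this, Complex.norm_natCast_cpow_of_pos (by norm_num)]
    have hre : (1 - z).re < 0 := by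
      simp only [Complex.sub_re, Complex.one_re]; linarith
    calc ((2 : ℕ) : ℝ) ^ (1 - z).re < 1 :=
          Real.rpow_lt_one_of_one_lt_of_neg (by norm_num) hre
      _ ≤ 1 := le_refl 1
  have hr1 : (1 : ℂ) - r ≠ 0 := by
    intro h
    have : r = 1 := by linear_combination -h
    rw [this] at hr_norm; simp at hr_norm
  have hr2 : (1 : ℂ) - r / 2 ≠ 0 := by
    intro h
    have : r = 2 := by linear_combination -2 * h
    rw [this] at hr_norm
    norm_num at hr_norm
  -- the sum over powers of two
  set fA : ℕ → ℂ := fun a => term φC z (2 ^ a) with hfA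
  set A : ℂ := r / 2 * (1 - r)⁻¹ + 1 with hAdef
  have hA : HasSum fA A := by
    have hgeo := hasSum_geometric_of_norm_lt_one hr_norm
    have h1 : HasSum (fun a : ℕ => r / 2 * r ^ a) (r / 2 * (1 - r)⁻¹) := hgeo.mul_left _
    have h2 : ∀ a : ℕ, fA (a + 1) = r / 2 * r ^ a := by
      intro a
      rw [hfA]
      simp only
      rw [term_of_ne_zero (pow_ne_zero _ two_ne_zero)]
      have hφ2 : Nat.totient (2 ^ (a + 1)) = 2 ^ a := by
        rw [Nat.totient_prime_pow Nat.prime_two (Nat.succ_pos a)]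
        simp
      rw [hφC]
      simp only
      rw [hφ2]
      have hcast : (((2 : ℕ) ^ (a + 1) : ℕ) : ℂ) = (2 : ℂ) ^ (a + 1) := by push_cast; ring
      rw [hcast, two_pow_cpow, hr_eq]
      have hne : ((2 : ℂ) ^ z) ≠ 0 := h2z
      rw [pow_succ]
      push_cast
      field_simp
      ring_nf
      rw [← mul_pow, mul_inv_cancel₀ hne, one_pow, one_mul]
    have h3 : HasSum (fun a : ℕ => fA (a + 1)) (r / 2 * (1 - r)⁻¹) :=
      h1.congr_fun fun a => (h2 a)
    have h4 := (hasSum_nat_add_iff (f := fA) 1).mp h3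
    have hfA0 : fA 0 = 1 := by
      rw [hfA]
      simp only [pow_zero]
      rw [term_of_ne_zero one_ne_zero]
      simp [hφC]
    simpa [hfA0, hAdef] using h4
  have hA_eq : A = (1 - r / 2) / (1 - r) := by
    rw [hAdef]
    field_simp
    ring
  have hA0 : A ≠ 0 := by
    rw [hA_eq]
    exact div_ne_zero hr2 hr1
  -- the odd part
  set fB : ℕ → ℂ := fun b => term φC z (2 * b + 1) with hfB
  have hodd_inj : Function.Injective (fun b : ℕ => 2 * b + 1) := by
    intro x y h
    simpa using h
  have hBsummable : Summable fB := hS.summable.comp_injective hodd_inj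
  have hBsum : HasSum fB (∑' b, fB b) := hBsummable.hasSum
  -- the product decomposition
  set j : ℕ × ℕ → ℕ := fun p => 2 ^ p.1 * (2 * p.2 + 1) with hj
  have hj_inj : Function.Injective j := by
    rintro ⟨a, b⟩ ⟨a', b'⟩ h
    simp only [hj] at h
    have ha : a = a' := by
      have h1 := two_adic_val a b
      have h2 := two_adic_val a' b'
      rw [h] at h1
      exact h1.symm.trans h2
    subst ha
    have hb : 2 * b + 1 = 2 * b' + 1 :=
      Nat.eq_of_mul_eq_mul_left (pow_pos (by norm_num) a) h
    simp only [Prod.mk.injEq, true_and]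
    omega
  have hj_vanish : ∀ n ∉ Set.range j, term φC z n = 0 := by
    intro n hn
    rcases eq_or_ne n 0 with rfl | h0
    · simp [term]
    · exfalso
      obtain ⟨k, m, hm, rfl⟩ := Nat.exists_eq_two_pow_mul_odd h0
      obtain ⟨b, rfl⟩ := hm
      exact hn ⟨(k, b), by simp [hj]⟩
  have hterm_mul : ∀ p : ℕ × ℕ, term φC z (j p) = fA p.1 * fB p.2 := by
    rintro ⟨a, b⟩
    have hcop : Nat.Coprime (2 ^ a) (2 * b + 1) :=
      Nat.Coprime.pow_left _ (Nat.coprime_two_left.mpr ⟨b, by ring⟩)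
    rw [hfA, hfB]
    simp only [hj]
    rw [term_of_ne_zero (by positivity), term_of_ne_zero (pow_ne_zero _ two_ne_zero),
      term_of_ne_zero (by omega)]
    rw [hφC]
    simp only
    rw [Nat.totient_mul hcop, Nat.cast_mul, Nat.cast_mul (2 ^ a)]
    rw [Complex.natCast_mul_natCast_cpow]
    rw [div_mul_div_comm]
  have hprod : HasSum (fun p : ℕ × ℕ => fA p.1 * fB p.2) S := by
    have h := (hj_inj.hasSum_iff hj_vanish).mpr hS
    exact h.congr_fun fun p => (hterm_mul p).symm
  -- conclude the value of the odd sum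
  have hAB : A * (∑' b, fB b) = S := HasSum.mul_eq hA hBsum hprod
  have hBval : (∑' b, fB b) = S / A := by
    rw [eq_div_iff hA0, mul_comm]
    exact hAB
  rw [hBval] at hBsum
  -- identify the target value
  have hTval : S / A = (1 - (2 : ℂ) ^ (2 - 2 * (s : ℂ))) / (1 - (2 : ℂ) ^ (1 - 2 * (s : ℂ)))
      * riemannZeta (2 * (s : ℂ) - 2) / riemannZeta (2 * (s : ℂ) - 1) := by
    have e1 : (2 : ℂ) - 2 * (s : ℂ) = 1 - z := by rw [hzdef]; ring
    have e2 : (1 : ℂ) - 2 * (s : ℂ) = -z := by rw [hzdef]; ring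
    have e3 : 2 * (s : ℂ) - 2 = z - 1 := by rw [hzdef]; ring
    have e4 : 2 * (s : ℂ) - 1 = z := by rw [hzdef]
    rw [e1, e2, e3, e4, ← hrdef]
    have e5 : (2 : ℂ) ^ (-z) = r / 2 := by
      rw [hr_eq, Complex.cpow_neg]
      ring
    rw [e5, hSdef, hA_eq]
    field_simp
  rw [← hTval]
  -- transfer along the parametrization of odd numbers
  have hvanish : ∀ k ∉ Set.range (fun b : ℕ => 2 * b + 1),
      (if Odd k then (Nat.totient (k ^ 2) : ℂ) / (k : ℂ) ^ (2 * (s : ℂ)) else 0) = 0 := by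
    intro k hk
    have hko : ¬ Odd k := by
      intro hodd
      rw [Nat.odd_iff] at hodd
      exact hk ⟨k / 2, show 2 * (k / 2) + 1 = k by omega⟩
    simp [hko]
  rw [← Function.Injective.hasSum_iff hodd_inj hvanish]
  refine hBsum.congr_fun fun b => ?_
  -- pointwise identification of the terms
  have hb0 : (2 * b + 1 : ℕ) ≠ 0 := by omega
  have hbo : Odd (2 * b + 1) := ⟨b, by ring⟩
  simp only [Function.comp_apply, if_pos hbo]
  rw [hfB]
  simp only
  rw [term_of_ne_zero hb0, hφC]
  simp only
  have hk0 : ((2 * b + 1 : ℕ) : ℂ) ≠ 0 := Nat.cast_ne_zero.mpr hb0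
  have hφsq : Nat.totient ((2 * b + 1) ^ 2) = (2 * b + 1) * Nat.totient (2 * b + 1) :=
    totient_sq_eq' hb0
  have hpow : ((2 * b + 1 : ℕ) : ℂ) ^ (2 * (s : ℂ))
      = ((2 * b + 1 : ℕ) : ℂ) ^ z * ((2 * b + 1 : ℕ) : ℂ) := by
    rw [show 2 * (s : ℂ) = z + 1 by rw [hzdef]; ring, Complex.cpow_add _ _ hk0,
      Complex.cpow_one]
  have key : ∀ X Y P : ℂ, X ≠ 0 → X * Y / (P * X) = Y / P := by
    intro X Y P hX
    rw [mul_comm P X, ← div_div, mul_comm X Y, mul_div_assoc, div_self hX, mul_one]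
  rw [hφsq, hpow, Nat.cast_mul]
  exact key _ _ _ hk0
end
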